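/- Let n ≥ 3 and let α₁, …, α_{n−1} be real numbers which are algebraically independent over ℚ. Let f ∈ ℝ[X] be the polynomial with f(0) = 0 whose derivative is f'(X) = (X − α₁)⋯(X − α_{n−1}). Then the critical values f(α₁), …, f(α_{n−1}) are pairwise distinct: f(αᵢ) ≠ f(αⱼ) whenever i ≠ j. -/
import Mathlib
open Polynomial

noncomputable def integ {S : Type*} [CommRing S] [Algebra ℚ S] (p : S[X]) : S[X] :=
  p.sum fun k a => C (algebraMap ℚ S ((k + 1 : ℚ)⁻¹) * a) * X ^ (k + 1)

lemma integ_term_zero {S : Type*} [CommRing S] [Algebra ℚ S] (k : ℕ) :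
    C (algebraMap ℚ S ((k + 1 : ℚ)⁻¹) * (0 : S)) * X ^ (k + 1) = 0 := by
  rw [mul_zero, map_zero, zero_mul]

lemma integ_monomial {S : Type*} [CommRing S] [Algebra ℚ S] (k : ℕ) (a : S) :
    integ (monomial k a) = C (algebraMap ℚ S ((k + 1 : ℚ)⁻¹) * a) * X ^ (k + 1) := by
  unfold integ
  exact Polynomial.sum_monomial_index _ _ (by rw [mul_zero, map_zero, zero_mul])

lemma integ_add {S : Type*} [CommRing S] [Algebra ℚ S] (p q : S[X]) :
    integ (p + q) = integ p + integ q := by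
  unfold integ
  rw [Polynomial.sum_add_index]
  · intro i; rw [mul_zero, map_zero, zero_mul]
  · intro a b₁ b₂; rw [mul_add, map_add, add_mul]

lemma integ_zero {S : Type*} [CommRing S] [Algebra ℚ S] : integ (0 : S[X]) = 0 := by
  unfold integ; exact Polynomial.sum_zero_index _

lemma integ_sub {S : Type*} [CommRing S] [Algebra ℚ S] (p q : S[X]) :
    integ (p - q) = integ p - integ q := by
  have h := integ_add (p - q) q
  rw [sub_add_cancel] at h
  exact eq_sub_of_add_eq h.symm

lemma derivative_integ {S : Type*} [CommRing S] [Algebra ℚ S] (p : S[X]) :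
    derivative (integ p) = p := by
  induction p using Polynomial.induction_on' with
  | add p q hp hq => rw [integ_add, derivative_add, hp, hq]
  | monomial k a =>
    rw [integ_monomial, derivative_C_mul, derivative_X_pow]
    have h1 : algebraMap ℚ S ((k + 1 : ℚ)⁻¹) * (((k + 1 : ℕ)) : S) = 1 := by
      rw [show (((k+1 : ℕ)) : S) = algebraMap ℚ S ((k+1 : ℕ) : ℚ) by simp, ← map_mul]
      rw [show ((k + 1 : ℚ)⁻¹ * ((k+1:ℕ):ℚ)) = 1 by push_cast; field_simp]
      simp
    rw [show k + 1 - 1 = k from rfl, ← mul_assoc, ← C_mul, mul_right_comm, h1, one_mul,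
      C_mul_X_pow_eq_monomial]

lemma eval_zero_integ {S : Type*} [CommRing S] [Algebra ℚ S] (p : S[X]) :
    (integ p).eval 0 = 0 := by
  induction p using Polynomial.induction_on' with
  | add p q hp hq => rw [integ_add, eval_add, hp, hq, add_zero]
  | monomial k a =>
    rw [integ_monomial, eval_mul, eval_pow, eval_X, zero_pow (Nat.succ_ne_zero k), mul_zero]

lemma map_integ {S T : Type*} [CommRing S] [Algebra ℚ S] [CommRing T] [Algebra ℚ T]
    (φ : S →ₐ[ℚ] T) (p : S[X]) :
    (integ p).map (φ : S →+* T) = integ (p.map (φ : S →+* T)) := by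
  induction p using Polynomial.induction_on' with
  | add p q hp hq => rw [integ_add, Polynomial.map_add, Polynomial.map_add, hp, hq, integ_add]
  | monomial k a =>
    rw [integ_monomial, Polynomial.map_monomial, integ_monomial,
      Polynomial.map_mul, Polynomial.map_pow, map_X, map_C, map_mul]
    rw [map_mul, ← C_mul]
    simp only [RingHom.coe_coe, φ.commutes]

lemma poly_ext {S : Type*} [CommRing S] [NoZeroDivisors S] [CharZero S] {f g : S[X]}
    (hd : derivative f = derivative g) (h0 : f.eval 0 = g.eval 0) : f = g := by
  have h : derivative (f - g) = 0 := by rw [derivative_sub, hd, sub_self]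
  have hC := Polynomial.eq_C_of_natDegree_eq_zero
    (Polynomial.natDegree_eq_zero_of_derivative_eq_zero h)
  have h0' : (f - g).coeff 0 = 0 := by
    rw [Polynomial.coeff_zero_eq_eval_zero, eval_sub, h0, sub_self]
  rw [h0', map_zero] at hC
  exact sub_eq_zero.mp hC


theorem stmt_14 (n : ℕ) (hn : 3 ≤ n) (α : Fin (n - 1) → ℝ)
    (hα : AlgebraicIndependent ℚ α) (f : ℝ[X])
    (hf0 : f.eval 0 = 0)
    (hf' : derivative f = ∏ i : Fin (n - 1), (X - C (α i))) :
    ∀ i j : Fin (n - 1), i ≠ j → f.eval (α i) ≠ f.eval (α j) := by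
  classical
  intro i j hij hEq
  set φ : MvPolynomial (Fin (n - 1)) ℚ →ₐ[ℚ] ℝ := MvPolynomial.aeval α with hφ
  set p : (MvPolynomial (Fin (n - 1)) ℚ)[X] :=
    ∏ k : Fin (n - 1), (X - C (MvPolynomial.X k)) with hp
  have hmapp : p.map (φ : MvPolynomial (Fin (n - 1)) ℚ →+* ℝ)
      = ∏ k : Fin (n - 1), (X - C (α k)) := by
    rw [hp, Polynomial.map_prod]
    refine Finset.prod_congr rfl fun k _ => ?_
    rw [Polynomial.map_sub, map_X, map_C]
    simp only [hφ, RingHom.coe_coe, MvPolynomial.aeval_X]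
  have hF : (integ p).map (φ : MvPolynomial (Fin (n - 1)) ℚ →+* ℝ) = f := by
    apply poly_ext
    · rw [derivative_map, derivative_integ, hmapp, hf']
    · rw [map_integ φ, eval_zero_integ, hf0]
  have heval : ∀ k, φ ((integ p).eval (MvPolynomial.X k)) = f.eval (α k) := by
    intro k
    rw [← hF, Polynomial.eval_map,
      show α k = (φ : MvPolynomial (Fin (n - 1)) ℚ →+* ℝ) (MvPolynomial.X k) by
        simp only [hφ, RingHom.coe_coe, MvPolynomial.aeval_X],
      Polynomial.eval₂_at_apply]
    rfl
  set Q : MvPolynomial (Fin (n - 1)) ℚ :=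
    (integ p).eval (MvPolynomial.X i) - (integ p).eval (MvPolynomial.X j) with hQdef
  have hker : Q = 0 := by
    apply hα
    rw [map_zero, hQdef, map_sub]
    show φ _ - φ _ = 0
    rw [heval i, heval j, hEq, sub_self]
  -- evaluate at the rational point v i = 1, v k = 0 otherwise
  set v : Fin (n - 1) → ℚ := fun k => if k = i then 1 else 0 with hv
  set ψ : MvPolynomial (Fin (n - 1)) ℚ →ₐ[ℚ] ℚ := MvPolynomial.aeval v with hψ
  have hmapψ : p.map (ψ : MvPolynomial (Fin (n - 1)) ℚ →+* ℚ)
      = (X - C 1) * X ^ (n - 2) := by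
    rw [hp, Polynomial.map_prod]
    have hterm : ∀ k : Fin (n - 1),
        (X - C (MvPolynomial.X k) : (MvPolynomial (Fin (n - 1)) ℚ)[X]).map
          (ψ : MvPolynomial (Fin (n - 1)) ℚ →+* ℚ) = X - C (v k) := by
      intro k
      rw [Polynomial.map_sub, map_X, map_C]
      simp only [hψ, RingHom.coe_coe, MvPolynomial.aeval_X]
    rw [Finset.prod_congr rfl fun k _ => hterm k]
    rw [← Finset.mul_prod_erase Finset.univ _ (Finset.mem_univ i)]
    have h1 : v i = 1 := by simp [hv]
    have h2 : ∏ k ∈ Finset.univ.erase i, (X - C (v k) : ℚ[X]) = X ^ (n - 2) := by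
      have hzero : ∀ k ∈ Finset.univ.erase i, (X - C (v k) : ℚ[X]) = X := by
        intro k hk
        have : v k = 0 := by simp [hv, (Finset.mem_erase.mp hk).1]
        rw [this, map_zero, sub_zero]
      rw [Finset.prod_congr rfl hzero, Finset.prod_const,
        Finset.card_erase_of_mem (Finset.mem_univ i), Finset.card_univ, Fintype.card_fin,
        show n - 1 - 1 = n - 2 from by omega]
    rw [h1, h2]
  have hψQ : ψ Q = 0 := by rw [hker, map_zero]
  have hevalψ : ∀ k, ψ ((integ p).eval (MvPolynomial.X k)) =
      (integ ((X - C 1) * X ^ (n - 2))).eval (v k) := by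
    intro k
    rw [← hmapψ, ← map_integ ψ p, Polynomial.eval_map,
      show v k = (ψ : MvPolynomial (Fin (n - 1)) ℚ →+* ℚ) (MvPolynomial.X k) by
        simp only [hψ, RingHom.coe_coe, MvPolynomial.aeval_X],
      Polynomial.eval₂_at_apply]
    rfl
  rw [hQdef, map_sub, hevalψ i, hevalψ j] at hψQ
  have hvi : v i = 1 := by simp [hv]
  have hvj : v j = 0 := by
    have hji : ¬ j = i := fun h => hij h.symm
    simp [hv, hji]
  rw [hvi, hvj, eval_zero_integ, sub_zero] at hψQ
  have hexp : (X - C 1 : ℚ[X]) * X ^ (n - 2) = X ^ (n - 1) - X ^ (n - 2) := by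
    rw [sub_mul, C_1, one_mul, ← pow_succ']
    congr 2
    omega
  rw [hexp, integ_sub, X_pow_eq_monomial, X_pow_eq_monomial,
    integ_monomial, integ_monomial] at hψQ
  simp only [eval_sub, eval_mul, eval_C, eval_pow, eval_X, one_pow, mul_one,
    Algebra.algebraMap_self, map_inv₀, RingHom.id_apply] at hψQ
  have h1 : ((n - 1 : ℕ) : ℚ) + 1 = ((n - 2 : ℕ) : ℚ) + 1 := by
    have := sub_eq_zero.mp hψQ
    have := inv_injective this
    linarith [this]
  have : (n - 1 : ℕ) = (n - 2 : ℕ) := by exact_mod_cast (by linarith [h1] : ((n-1:ℕ):ℚ) = ((n-2:ℕ):ℚ))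
  omega
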